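/- arXiv:1111.5560 — 7 statements merged into one kernel-verified Lean document; each statement's English description precedes it below -/
import Mathlib

section
/- Let A be a complete unital locally convex algebra and A' a dense unital subalgebra of A. If I is a proper closed left ideal of A' (closed in the subspace topology), then the closure of I in A is a proper closed left ideal of A. -/
/-- `I` is a left ideal of the subalgebra (given as a subset) `B` of `A`. -/
structure IsLeftIdealIn {A : Type*} [Ring A] [Algebra ℂ A] (B I : Set A) : Prop where
  subset : I ⊆ B
  zero_mem : (0 : A) ∈ I
  add_mem : ∀ {x y : A}, x ∈ I → y ∈ I → x + y ∈ I
  smul_mem : ∀ (c : ℂ) {x : A}, x ∈ I → c • x ∈ I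
  mul_mem : ∀ {b x : A}, b ∈ B → x ∈ I → b * x ∈ I

/-- Let `A` be a complete unital locally convex algebra and `A'` a dense unital
subalgebra. If `I` is a proper left ideal of `A'` which is closed in the subspace
topology of `A'`, then the closure of `I` in `A` is a proper closed left ideal of `A`. -/
theorem closure_of_proper_closed_left_ideal_of_dense_subalgebra
    {A : Type*} [Ring A] [Algebra ℂ A] [UniformSpace A] [IsUniformAddGroup A]
    [IsTopologicalRing A] [ContinuousSMul ℂ A] [LocallyConvexSpace ℝ A] [CompleteSpace A]
    (A' : Subalgebra ℂ A) (hdense : Dense (A' : Set A))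
    {I : Set A} (hI : IsLeftIdealIn (A' : Set A) I)
    (hclosed : IsClosed ((Subtype.val ⁻¹' I : Set A')))
    (hproper : (1 : A) ∉ I) :
    IsLeftIdealIn (Set.univ : Set A) (closure I) ∧ IsClosed (closure I) ∧
      (1 : A) ∉ closure I := by
  have hmul' : ∀ a ∈ (A' : Set A), ∀ x ∈ closure I, a * x ∈ closure I := by
    intro a ha x hx
    exact map_mem_closure (continuous_mul_left a) hx fun y hy => hI.mul_mem ha hy
  refine ⟨⟨fun _ _ => Set.mem_univ _, subset_closure hI.zero_mem, ?_, ?_, ?_⟩,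
    isClosed_closure, ?_⟩
  · intro x y hx hy
    exact map_mem_closure₂ continuous_add hx hy fun a ha b hb => hI.add_mem ha hb
  · intro c x hx
    exact map_mem_closure (continuous_const_smul c) hx fun y hy => hI.smul_mem c hy
  · intro b x _ hx
    have hb : b ∈ closure (A' : Set A) := by rw [hdense.closure_eq]; trivial
    have : (fun a => a * x) b ∈ closure (closure I) :=
      map_mem_closure (f := fun a => a * x) (continuous_mul_right x) hb fun a ha => hmul' a ha x hx
    rwa [closure_closure] at this
  · obtain ⟨C, hC, hCI⟩ := isClosed_induced_iff.mp hclosed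
    have hIC : I ⊆ C := fun x hx => by
      have hxA : x ∈ A' := hI.subset hx
      have : (⟨x, hxA⟩ : A') ∈ Subtype.val ⁻¹' C := by rw [hCI]; exact hx
      exact this
    intro h1
    have h1C : (1 : A) ∈ C := (closure_minimal hIC hC) h1
    have : (⟨1, A'.one_mem⟩ : A') ∈ Subtype.val ⁻¹' I := by rw [← hCI]; exact h1C
    exact hproper this
end

section
/- Let P be a compact smooth manifold, G a compact group, and (C^∞(P), G, α) a dynamical system. Then each character χ: C^∞(P)^G → ℂ extends to a character χ̃: C^∞(P) → ℂ. -/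
open scoped Manifold

section SmoothCompactOpen

variable {E : Type*} [NormedAddCommGroup E] [NormedSpace ℝ E]
  {H : Type*} [TopologicalSpace H] (I : ModelWithCorners ℝ E H)
  (P : Type*) [TopologicalSpace P] [ChartedSpace H P]
  (A : Type*) [NormedRing A] [NormedAlgebra ℝ A]

instance : ContMDiffRing 𝓘(ℝ, A) (⊤ : ℕ∞) A :=
  { instNormedSpaceLieAddGroup with
    contMDiff_mul := by
      rw [contMDiff_iff]
      refine ⟨continuous_mul, fun x y => ?_⟩
      simp only [mfld_simps, chartAt_self_eq]
      rw [contDiffOn_univ]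
      exact contDiff_mul }

/-- The smooth compact-open topology on `C^∞(P, A)`: the initial topology with respect
to all local iterated derivatives (read through the charts of `P`), each function
space of derivatives carrying the topology of uniform convergence on compact sets. -/
noncomputable instance smoothCompactOpenTopology :
    TopologicalSpace (ContMDiffMap I 𝓘(ℝ, A) P A (⊤ : ℕ∞)) :=
  ⨅ (x : P) (n : ℕ),
    TopologicalSpace.induced
      (fun f : ContMDiffMap I 𝓘(ℝ, A) P A (⊤ : ℕ∞) => fun y : (extChartAt I x).target =>
        iteratedFDerivWithin ℝ n ((f : P → A) ∘ (extChartAt I x).symm)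
          ((extChartAt I x).symm ⁻¹' Set.univ ∩ (extChartAt I x).target) (y : E))
      ((UniformOnFun.uniformSpace ((extChartAt I x).target)
          (E [×n]→L[ℝ] A) {K : Set ((extChartAt I x).target) | IsCompact K}).toTopologicalSpace)

end SmoothCompactOpen

section SmoothComplexFunctions

variable {E : Type*} [NormedAddCommGroup E] [NormedSpace ℝ E]
  {H : Type*} [TopologicalSpace H] (I : ModelWithCorners ℝ E H)
  (P : Type*) [TopologicalSpace P] [ChartedSpace H P]

/-- The ℂ-algebra structure on `C^∞(P) = C^∞(P, ℂ)`, given by the constant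
functions. -/
noncomputable instance : Algebra ℂ (ContMDiffMap I 𝓘(ℝ, ℂ) P ℂ (⊤ : ℕ∞)) :=
  RingHom.toAlgebra
    { toFun := fun c => ContMDiffMap.const c
      map_one' := rfl
      map_mul' := fun _ _ => rfl
      map_zero' := rfl
      map_add' := fun _ _ => rfl }

end SmoothComplexFunctions

/-- A dynamical system `(A, G, α)`: a group homomorphism from `G` into the
ℂ-algebra automorphisms of `A` inducing a continuous action of `G` on `A`. -/
structure DynamicalSystem (A : Type*) [Ring A] [Algebra ℂ A] [TopologicalSpace A]
    (G : Type*) [Group G] [TopologicalSpace G] where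
  α : G →* (A ≃ₐ[ℂ] A)
  continuous_act : Continuous fun p : G × A => α p.1 p.2

/-- The fixed point algebra `A^G` as a subalgebra of `A`. -/
def DynamicalSystem.fixedSubalgebra {A : Type*} [Ring A] [Algebra ℂ A]
    [TopologicalSpace A] {G : Type*} [Group G] [TopologicalSpace G]
    (D : DynamicalSystem A G) : Subalgebra ℂ A where
  carrier := {a : A | ∀ g : G, D.α g a = a}
  mul_mem' := fun ha hb g => by rw [map_mul, ha g, hb g]
  add_mem' := fun ha hb g => by rw [map_add, ha g, hb g]
  algebraMap_mem' := fun c g => (D.α g).commutes c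


section MyAux
variable {E : Type*} [NormedAddCommGroup E] [NormedSpace ℝ E]
  {H : Type*} [TopologicalSpace H] {I : ModelWithCorners ℝ E H}
  {P : Type*} [TopologicalSpace P] [ChartedSpace H P]

noncomputable def evalAlgHomC (p : P) : ContMDiffMap I 𝓘(ℝ, ℂ) P ℂ (⊤ : ℕ∞) →ₐ[ℂ] ℂ where
  toFun f := f p
  map_one' := rfl
  map_mul' _ _ := rfl
  map_zero' := rfl
  map_add' _ _ := rfl
  commutes' _ := rfl

noncomputable def conjSmoothMap (f : ContMDiffMap I 𝓘(ℝ, ℂ) P ℂ (⊤ : ℕ∞)) : ContMDiffMap I 𝓘(ℝ, ℂ) P ℂ (⊤ : ℕ∞) :=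
  ⟨fun p => (starRingEnd ℂ) (f p),
    (Complex.conjCLE : ℂ →L[ℝ] ℂ).contDiff.comp_contMDiff f.contMDiff⟩

noncomputable def invSmoothMap (f : ContMDiffMap I 𝓘(ℝ, ℂ) P ℂ (⊤ : ℕ∞)) (hf : ∀ p, f p ≠ 0) :
    ContMDiffMap I 𝓘(ℝ, ℂ) P ℂ (⊤ : ℕ∞) :=
  ⟨fun p => (f p)⁻¹, fun p => (contDiffAt_inv ℝ (hf p)).comp_contMDiffAt (f.contMDiff p)⟩

lemma isUnit_of_nonvanishing (f : ContMDiffMap I 𝓘(ℝ, ℂ) P ℂ (⊤ : ℕ∞)) (hf : ∀ p, f p ≠ 0) :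
    IsUnit f :=
  ⟨⟨f, invSmoothMap f hf,
      ContMDiffMap.ext fun p => mul_inv_cancel₀ (hf p),
      ContMDiffMap.ext fun p => inv_mul_cancel₀ (hf p)⟩, rfl⟩


lemma char_eq_eval [CompactSpace P] (φ : ContMDiffMap I 𝓘(ℝ, ℂ) P ℂ (⊤ : ℕ∞) →ₐ[ℂ] ℂ) :
    ∃ p : P, ∀ f : ContMDiffMap I 𝓘(ℝ, ℂ) P ℂ (⊤ : ℕ∞), φ f = f p := by
  by_contra hc
  push_neg at hc
  choose b hb using hc
  set f : P → ContMDiffMap I 𝓘(ℝ, ℂ) P ℂ (⊤ : ℕ∞) :=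
    fun p => b p - algebraMap ℂ _ (φ (b p)) with hfdef
  have hφf : ∀ p, φ (f p) = 0 := by
    intro p; simp [hfdef]
  have hfp : ∀ p, (f p) p ≠ 0 := by
    intro p
    have : (f p) p = (b p) p - φ (b p) := rfl
    rw [this, sub_ne_zero]
    exact fun h => hb p h.symm
  set h : P → ContMDiffMap I 𝓘(ℝ, ℂ) P ℂ (⊤ : ℕ∞) :=
    fun p => f p * conjSmoothMap (f p) with hhdef
  have hh_apply : ∀ p q, (h p) q = ((Complex.normSq ((f p) q) : ℝ) : ℂ) := by
    intro p q
    have : (h p) q = (f p) q * (starRingEnd ℂ) ((f p) q) := rfl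
    rw [this, Complex.mul_conj]
  have hφh : ∀ p, φ (h p) = 0 := by
    intro p; rw [hhdef]; simp [map_mul, hφf p]
  have hcover : (Set.univ : Set P) ⊆ ⋃ p, {q | (h p) q ≠ 0} := by
    intro q _
    refine Set.mem_iUnion.2 ⟨q, ?_⟩
    simp only [Set.mem_setOf_eq, hh_apply q q]
    exact_mod_cast fun hz => hfp q (by
      have := Complex.normSq_eq_zero.1 (by exact_mod_cast hz)
      exact this)
  obtain ⟨s, hs⟩ := IsCompact.elim_finite_subcover isCompact_univ
    (fun p => {q | (h p) q ≠ 0})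
    (fun p => isOpen_ne.preimage (h p).contMDiff.continuous) hcover
  set g : ContMDiffMap I 𝓘(ℝ, ℂ) P ℂ (⊤ : ℕ∞) := ∑ p ∈ s, h p with hgdef
  have hφg : φ g = 0 := by
    rw [hgdef, map_sum]
    exact Finset.sum_eq_zero fun p _ => hφh p
  have hg_apply : ∀ q, g q = ((∑ p ∈ s, Complex.normSq ((f p) q) : ℝ) : ℂ) := by
    intro q
    have : g q = evalAlgHomC q g := rfl
    rw [this, hgdef, map_sum]
    push_cast
    exact Finset.sum_congr rfl fun p _ => hh_apply p q
  have hgne : ∀ q, g q ≠ 0 := by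
    intro q
    obtain ⟨p₀, hp₀s, hp₀⟩ := Set.mem_iUnion₂.1 (hs (Set.mem_univ q))
    rw [hg_apply q]
    rw [Complex.ofReal_ne_zero]
    have hpos : 0 < ∑ p ∈ s, Complex.normSq ((f p) q) := by
      refine Finset.sum_pos' (fun p _ => Complex.normSq_nonneg _) ⟨p₀, hp₀s, ?_⟩
      have : (f p₀) q ≠ 0 := by
        intro hz
        apply hp₀
        simp only [Set.mem_setOf_eq, hh_apply p₀ q] at *
        simp [hz]
      exact Complex.normSq_pos.mpr this
    exact ne_of_gt hpos
  have := (isUnit_of_nonvanishing g hgne).map φ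
  rw [hφg] at this
  exact not_isUnit_zero this

end MyAux

section Main
set_option maxHeartbeats 1000000
set_option synthInstance.maxHeartbeats 1000000

variable {E : Type*} [NormedAddCommGroup E] [NormedSpace ℝ E]
  {H : Type*} [TopologicalSpace H] {I : ModelWithCorners ℝ E H}
  {P : Type*} [TopologicalSpace P] [ChartedSpace H P] [CompactSpace P]
  {G : Type*} [Group G] [TopologicalSpace G]
  [TopologicalSpace (ContMDiffMap I 𝓘(ℝ, ℂ) P ℂ (⊤ : ℕ∞))]

lemma fixed_conj_mem (D : DynamicalSystem (ContMDiffMap I 𝓘(ℝ, ℂ) P ℂ (⊤ : ℕ∞)) G)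
    {a : ContMDiffMap I 𝓘(ℝ, ℂ) P ℂ (⊤ : ℕ∞)} (ha : a ∈ D.fixedSubalgebra) :
    conjSmoothMap a ∈ D.fixedSubalgebra := by
  intro g
  apply ContMDiffMap.ext
  intro p
  obtain ⟨q, hq⟩ := char_eq_eval ((evalAlgHomC p).comp (D.α g).toAlgHom)
  have h1 : (D.α g (conjSmoothMap a)) p = (conjSmoothMap a) q := hq (conjSmoothMap a)
  have h2 : (D.α g a) p = a q := hq a
  have h3 : (D.α g a) p = a p := by rw [ha g]
  have h4 : (conjSmoothMap a) q = (starRingEnd ℂ) (a q) := rfl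
  have h5 : (conjSmoothMap a) p = (starRingEnd ℂ) (a p) := rfl
  rw [h1, h4, ← h2, h3, ← h5]

lemma fixed_inv_mem (D : DynamicalSystem (ContMDiffMap I 𝓘(ℝ, ℂ) P ℂ (⊤ : ℕ∞)) G)
    {a b : ContMDiffMap I 𝓘(ℝ, ℂ) P ℂ (⊤ : ℕ∞)} (ha : a ∈ D.fixedSubalgebra)
    (hab : a * b = 1) : b ∈ D.fixedSubalgebra := by
  intro g
  have h1 : a * D.α g b = 1 := by
    conv_lhs => rw [← ha g, ← map_mul, hab, map_one]
  have h2 : a * b = 1 := hab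
  calc D.α g b = (a * b) * D.α g b := by rw [h2, one_mul]
    _ = (a * D.α g b) * b := by ring
    _ = b := by rw [h1, one_mul]

theorem character_extends
    (D : DynamicalSystem (ContMDiffMap I 𝓘(ℝ, ℂ) P ℂ (⊤ : ℕ∞)) G)
    (χ : D.fixedSubalgebra →ₐ[ℂ] ℂ) :
    ∃ χext : ContMDiffMap I 𝓘(ℝ, ℂ) P ℂ (⊤ : ℕ∞) →ₐ[ℂ] ℂ,
      ∀ b : D.fixedSubalgebra, χext (b : ContMDiffMap I 𝓘(ℝ, ℂ) P ℂ (⊤ : ℕ∞)) = χ b := by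
  have key : ∃ p : P, ∀ b : D.fixedSubalgebra,
      (b : ContMDiffMap I 𝓘(ℝ, ℂ) P ℂ (⊤ : ℕ∞)) p = χ b := by
    by_contra hc
    push_neg at hc
    choose b hb using hc
    set f : P → D.fixedSubalgebra :=
      fun p => b p - algebraMap ℂ _ (χ (b p)) with hfdef
    have hχf : ∀ p, χ (f p) = 0 := by intro p; simp [hfdef]
    have hfval : ∀ p q, ((f p : ContMDiffMap I 𝓘(ℝ, ℂ) P ℂ (⊤ : ℕ∞))) q
        = (b p : ContMDiffMap I 𝓘(ℝ, ℂ) P ℂ (⊤ : ℕ∞)) q - χ (b p) := fun p q => rfl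
    have hfp : ∀ p, ((f p : ContMDiffMap I 𝓘(ℝ, ℂ) P ℂ (⊤ : ℕ∞))) p ≠ 0 := by
      intro p
      rw [hfval, sub_ne_zero]
      exact hb p
    set h : P → D.fixedSubalgebra := fun p =>
      f p * ⟨conjSmoothMap ↑(f p), fixed_conj_mem D (f p).2⟩ with hhdef
    have hh_apply : ∀ p q, ((h p : ContMDiffMap I 𝓘(ℝ, ℂ) P ℂ (⊤ : ℕ∞))) q
        = ((Complex.normSq (((f p : ContMDiffMap I 𝓘(ℝ, ℂ) P ℂ (⊤ : ℕ∞))) q) : ℝ) : ℂ) := by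
      intro p q
      have : ((h p : ContMDiffMap I 𝓘(ℝ, ℂ) P ℂ (⊤ : ℕ∞))) q
          = ((f p : ContMDiffMap I 𝓘(ℝ, ℂ) P ℂ (⊤ : ℕ∞))) q
            * (starRingEnd ℂ) (((f p : ContMDiffMap I 𝓘(ℝ, ℂ) P ℂ (⊤ : ℕ∞))) q) := rfl
      rw [this, Complex.mul_conj]
    have hχh : ∀ p, χ (h p) = 0 := by
      intro p; rw [hhdef]; simp only [map_mul, hχf p, zero_mul]
    have hcover : (Set.univ : Set P) ⊆
        ⋃ p, {q | ((h p : ContMDiffMap I 𝓘(ℝ, ℂ) P ℂ (⊤ : ℕ∞))) q ≠ 0} := by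
      intro q _
      refine Set.mem_iUnion.2 ⟨q, ?_⟩
      simp only [Set.mem_setOf_eq, hh_apply q q]
      rw [Complex.ofReal_ne_zero]
      exact ne_of_gt (Complex.normSq_pos.mpr (hfp q))
    obtain ⟨s, hs⟩ := IsCompact.elim_finite_subcover isCompact_univ
      (fun p => {q | ((h p : ContMDiffMap I 𝓘(ℝ, ℂ) P ℂ (⊤ : ℕ∞))) q ≠ 0})
      (fun p => isOpen_ne.preimage (h p : ContMDiffMap I 𝓘(ℝ, ℂ) P ℂ (⊤ : ℕ∞)).contMDiff.continuous)
      hcover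
    set g : D.fixedSubalgebra := ∑ p ∈ s, h p with hgdef
    have hχg : χ g = 0 := by
      rw [hgdef, map_sum]
      exact Finset.sum_eq_zero fun p _ => hχh p
    have hg_apply : ∀ q, ((g : ContMDiffMap I 𝓘(ℝ, ℂ) P ℂ (⊤ : ℕ∞))) q
        = ((∑ p ∈ s, Complex.normSq (((f p : ContMDiffMap I 𝓘(ℝ, ℂ) P ℂ (⊤ : ℕ∞))) q) : ℝ) : ℂ) := by
      intro q
      have h0 : ((g : ContMDiffMap I 𝓘(ℝ, ℂ) P ℂ (⊤ : ℕ∞))) q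
          = (evalAlgHomC q).comp ((D.fixedSubalgebra).val) g := rfl
      rw [h0, hgdef, map_sum]
      push_cast
      refine Finset.sum_congr rfl fun p _ => ?_
      exact hh_apply p q
    have hgne : ∀ q, ((g : ContMDiffMap I 𝓘(ℝ, ℂ) P ℂ (⊤ : ℕ∞))) q ≠ 0 := by
      intro q
      obtain ⟨p₀, hp₀s, hp₀⟩ := Set.mem_iUnion₂.1 (hs (Set.mem_univ q))
      rw [hg_apply q, Complex.ofReal_ne_zero]
      refine ne_of_gt (Finset.sum_pos' (fun p _ => Complex.normSq_nonneg _) ⟨p₀, hp₀s, ?_⟩)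
      refine Complex.normSq_pos.mpr ?_
      intro hz
      apply hp₀
      simp only [Set.mem_setOf_eq, hh_apply p₀ q, hz, not_not]
      simp
    -- inverse of g is in the fixed subalgebra
    set gi := invSmoothMap (g : ContMDiffMap I 𝓘(ℝ, ℂ) P ℂ (⊤ : ℕ∞)) hgne with hgidef
    have hggi : (g : ContMDiffMap I 𝓘(ℝ, ℂ) P ℂ (⊤ : ℕ∞)) * gi = 1 :=
      ContMDiffMap.ext fun p => mul_inv_cancel₀ (hgne p)
    have hgimem : gi ∈ D.fixedSubalgebra := fixed_inv_mem D g.2 hggi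
    have hunit : χ g * χ ⟨gi, hgimem⟩ = 1 := by
      rw [← map_mul]
      have : (g * ⟨gi, hgimem⟩ : D.fixedSubalgebra) = 1 := Subtype.ext hggi
      rw [this, map_one]
    rw [hχg, zero_mul] at hunit
    exact zero_ne_one hunit
  obtain ⟨p, hp⟩ := key
  exact ⟨evalAlgHomC p, fun b => hp b⟩

end Main


/-- Let `P` be a compact smooth manifold, `G` a compact group and `(C^∞(P), G, α)` a
dynamical system. Then each character `χ : C^∞(P)^G → ℂ` extends to a character
`χ̃ : C^∞(P) → ℂ`. -/
theorem character_of_smooth_fixedSubalgebra_extends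
    {E : Type*} [NormedAddCommGroup E] [NormedSpace ℝ E]
    {H : Type*} [TopologicalSpace H] (I : ModelWithCorners ℝ E H)
    (P : Type*) [TopologicalSpace P] [ChartedSpace H P]
    [IsManifold I (⊤ : ℕ∞) P] [CompactSpace P]
    {G : Type*} [Group G] [TopologicalSpace G] [IsTopologicalGroup G] [CompactSpace G]
    (D : DynamicalSystem (ContMDiffMap I 𝓘(ℝ, ℂ) P ℂ (⊤ : ℕ∞)) G)
    (χ : D.fixedSubalgebra →ₐ[ℂ] ℂ) :
    ∃ χext : ContMDiffMap I 𝓘(ℝ, ℂ) P ℂ (⊤ : ℕ∞) →ₐ[ℂ] ℂ,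
      ∀ b : D.fixedSubalgebra, χext (b : ContMDiffMap I 𝓘(ℝ, ℂ) P ℂ (⊤ : ℕ∞)) = χ b := by
  exact character_extends D χ
end

section
/- Let A be a complex continuous inverse algebra. Then for every character χ ∈ Γ_A and every a ∈ A, χ(a) lies in the spectrum σ(a) of a; consequently the Gelfand spectrum Γ_A is a compact Hausdorff space. -/
/-- A continuous inverse algebra (CIA): a unital (locally convex) topological algebra
whose group of units is open and whose inversion is continuous at `1`. -/
def IsCIA (A : Type*) [Ring A] [TopologicalSpace A] : Prop :=
  IsOpen {a : A | IsUnit a} ∧ ContinuousAt (Ring.inverse : A → A) 1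

/-- The Gelfand spectrum of a complex algebra `A`: the set of (nonzero) algebra
homomorphisms `A → ℂ`, viewed inside `A → ℂ` with the topology of pointwise
convergence. -/
def GelfandSpectrum (A : Type*) [Ring A] [Algebra ℂ A] : Set (A → ℂ) :=
  {f : A → ℂ | ∃ χ : A →ₐ[ℂ] ℂ, f = ⇑χ}

section aux

variable (A : Type*) [Ring A] [Algebra ℂ A] [TopologicalSpace A] [IsTopologicalRing A]
    [ContinuousSMul ℂ A]

/-- Characters map into the spectrum. -/
lemma char_mem_spectrum (χ : A →ₐ[ℂ] ℂ) (a : A) : χ a ∈ spectrum ℂ a := by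
  rw [spectrum.mem_iff]
  intro h
  have := h.map χ
  simp at this

lemma spectrum_isClosed (hA : IsCIA A) (a : A) : IsClosed (spectrum ℂ a) := by
  have : spectrum ℂ a = (fun z : ℂ => algebraMap ℂ A z - a) ⁻¹' {x | IsUnit x}ᶜ := by
    ext z; simp [spectrum.mem_iff]
  rw [this]
  have hc : Continuous fun z : ℂ => algebraMap ℂ A z - a := by
    have : Continuous fun z : ℂ => z • (1 : A) := continuous_id.smul continuous_const
    simp only [Algebra.algebraMap_eq_smul_one]; exact this.sub continuous_const
  exact (hA.1.isClosed_compl).preimage hc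

lemma spectrum_isCompact (hA : IsCIA A) (a : A) : IsCompact (spectrum ℂ a) := by
  -- find ε > 0 such that |μ| < ε → 1 - μ • a is a unit
  have hopen : IsOpen {μ : ℂ | IsUnit (1 - μ • a)} := by
    have hc : Continuous fun μ : ℂ => (1 : A) - μ • a :=
      continuous_const.sub (continuous_id.smul continuous_const)
    exact hA.1.preimage hc
  have h0 : (0 : ℂ) ∈ {μ : ℂ | IsUnit (1 - μ • a)} := by simp
  obtain ⟨ε, hε, hball⟩ := Metric.isOpen_iff.mp hopen 0 h0
  have hsub : spectrum ℂ a ⊆ Metric.closedBall 0 (2 / ε) := by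
    intro z hz
    by_contra hcb
    simp only [Metric.mem_closedBall, dist_zero_right, not_le] at hcb
    have hzpos : 0 < ‖z‖ := lt_of_le_of_lt (by positivity) hcb
    have hzne : z ≠ 0 := by simpa using hzpos.ne'
    have hmem : (z⁻¹ : ℂ) ∈ Metric.ball (0:ℂ) ε := by
      simp only [Metric.mem_ball, dist_zero_right, norm_inv]
      rw [inv_lt_comm₀ hzpos hε]
      calc ε⁻¹ < 2 / ε := by rw [div_eq_mul_inv]; nlinarith [inv_pos.mpr hε]
        _ < ‖z‖ := hcb
    have hunit : IsUnit (1 - z⁻¹ • a) := hball hmem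
    have : IsUnit (algebraMap ℂ A z - a) := by
      have heq2 : algebraMap ℂ A z - a = algebraMap ℂ A z * (1 - z⁻¹ • a) := by
        rw [mul_sub, mul_one, ← Algebra.smul_def, smul_smul, mul_inv_cancel₀ hzne, one_smul]
      rw [heq2]
      exact ((IsUnit.mk0 z hzne).map (algebraMap ℂ A)).mul hunit
    exact (spectrum.mem_iff.mp hz) this
  exact (isCompact_closedBall _ _).of_isClosed_subset (spectrum_isClosed A hA a) hsub

lemma gelfand_isClosed : IsClosed (GelfandSpectrum A) := by
  have heq : GelfandSpectrum A =
      {f : A → ℂ | f 1 = 1} ∩ (⋂ (x : A) (y : A), {f | f (x + y) = f x + f y}) ∩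
        (⋂ (x : A) (y : A), {f | f (x * y) = f x * f y}) ∩
        (⋂ (c : ℂ) (x : A), {f | f (c • x) = c * f x}) := by
    ext f
    constructor
    · rintro ⟨χ, rfl⟩
      refine ⟨⟨⟨by simp, ?_⟩, ?_⟩, ?_⟩ <;> simp [Set.mem_iInter]
    · rintro ⟨⟨⟨h1, hadd⟩, hmul⟩, hsmul⟩
      simp only [Set.mem_iInter, Set.mem_setOf_eq] at h1 hadd hmul hsmul
      have h0 : f 0 = 0 := by have := hsmul 0 0; simpa using this
      refine ⟨⟨⟨⟨⟨f, h1⟩, hmul⟩, h0, hadd⟩, ?_⟩, rfl⟩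
      intro c
      have := hsmul c 1
      simp only [smul_eq_mul, mul_one, h1] at this
      simp [Algebra.algebraMap_eq_smul_one, this]
  rw [heq]
  refine (((isClosed_eq (continuous_apply _) continuous_const).inter ?_).inter ?_).inter ?_ <;>
    refine isClosed_iInter fun x => isClosed_iInter fun y => ?_
  · exact isClosed_eq (continuous_apply _) ((continuous_apply x).add (continuous_apply y))
  · exact isClosed_eq (continuous_apply _) ((continuous_apply x).mul (continuous_apply y))
  · exact isClosed_eq (continuous_apply _) (continuous_const.mul (continuous_apply y))

end aux

/-- In a complex CIA, every character takes each `a` into its spectrum `σ(a)`;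
consequently the Gelfand spectrum is a compact Hausdorff space. -/
theorem gelfandSpectrum_compact_hausdorff
    (A : Type*) [Ring A] [Algebra ℂ A] [TopologicalSpace A] [IsTopologicalRing A]
    [ContinuousSMul ℂ A] [LocallyConvexSpace ℝ A]
    (hA : IsCIA A) :
    (∀ (χ : A →ₐ[ℂ] ℂ) (a : A), χ a ∈ spectrum ℂ a) ∧
      CompactSpace (GelfandSpectrum A) ∧ T2Space (GelfandSpectrum A) := by
  refine ⟨char_mem_spectrum A, ?_, inferInstance⟩
  rw [← isCompact_iff_compactSpace]
  have hK : IsCompact (Set.pi Set.univ fun a : A => spectrum ℂ a) :=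
    isCompact_univ_pi (spectrum_isCompact A hA)
  refine hK.of_isClosed_subset (gelfand_isClosed A) ?_
  rintro f ⟨χ, rfl⟩
  intro a _
  exact char_mem_spectrum A χ a
end

section
/- Let A be a continuous inverse algebra and I ⊆ A a proper closed two-sided ideal. Then the quotient algebra A/I, equipped with the quotient topology, is a continuous inverse algebra. -/
/-- The quotient topology on the quotient of a ring by a ring congruence. -/
instance {A : Type*} [Ring A] [TopologicalSpace A] (c : RingCon A) :
    TopologicalSpace c.Quotient :=
  inferInstanceAs (TopologicalSpace (Quotient c.toSetoid))

/-- Let `A` be a continuous inverse algebra and `I ⊆ A` a proper closed two-sided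
ideal. Then the quotient algebra `A/I`, equipped with the quotient topology, is a
continuous inverse algebra. -/
theorem isCIA_quotient
    {A : Type*} [Ring A] [Algebra ℂ A] [TopologicalSpace A] [IsTopologicalRing A]
    [ContinuousSMul ℂ A] [LocallyConvexSpace ℝ A]
    (hA : IsCIA A) (I : TwoSidedIdeal A)
    (hclosed : IsClosed (I : Set A)) (hproper : (1 : A) ∉ I) :
    IsCIA I.ringCon.Quotient := by
  obtain ⟨hopen, hinv⟩ := hA
  set c := I.ringCon with hc
  set q : A →+* c.Quotient := c.mk' with hq
  have hqcont : Continuous q := continuous_quotient_mk'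
  have hqsurj : Function.Surjective q := Quotient.mk''_surjective
  have hqm : Topology.IsQuotientMap (q : A → c.Quotient) := isQuotientMap_quotient_mk'
  -- q is an open map
  have hqopen : IsOpenMap (q : A → c.Quotient) := by
    intro U hU
    rw [← hqm.isOpen_preimage]
    have : (q : A → c.Quotient) ⁻¹' (q '' U) = ⋃ i ∈ (I : Set A), (· + i) '' U := by
      ext a
      simp only [Set.mem_preimage, Set.mem_image, Set.mem_iUnion]
      constructor
      · rintro ⟨u, hu, he⟩
        have : c u a := Quotient.eq''.mp he
        rw [hc, I.rel_iff] at this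
        refine ⟨a - u, by simpa using I.neg_mem this, u, hu, by abel⟩
      · rintro ⟨i, hi, u, hu, he⟩
        refine ⟨u, hu, Quotient.sound' ?_⟩
        show c u a
        rw [hc, I.rel_iff]
        simpa [← he] using I.neg_mem hi
    rw [this]
    exact isOpen_biUnion fun i _ =>
      (Homeomorph.addRight i).isOpenMap U hU
  -- key construction: unit neighbourhoods of 1 in the quotient with controlled inverses
  have key : ∀ S ∈ nhds (1 : c.Quotient), ∃ W, IsOpen W ∧ (1 : c.Quotient) ∈ W ∧
      ∀ x ∈ W, IsUnit x ∧ Ring.inverse x ∈ S := by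
    intro S hS
    have h1 : (q : A → c.Quotient) ⁻¹' S ∈ nhds (1 : A) := by
      have := hqcont.continuousAt (x := (1 : A))
      exact this (by simpa using hS)
    have h2 : (Ring.inverse : A → A) ⁻¹' ((q : A → c.Quotient) ⁻¹' S) ∈ nhds (1 : A) := by
      have h1' : (q : A → c.Quotient) ⁻¹' S ∈ nhds (Ring.inverse (1 : A)) := by
        rwa [Ring.inverse_one]
      exact hinv h1'
    obtain ⟨U, hUsub, hUopen, hU1⟩ := mem_nhds_iff.mp h2
    refine ⟨q '' (U ∩ {a | IsUnit a}), hqopen _ (hUopen.inter hopen), ⟨1, ⟨hU1, isUnit_one⟩, map_one q⟩, ?_⟩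
    rintro x ⟨a, ⟨haU, haUnit⟩, rfl⟩
    refine ⟨haUnit.map q, ?_⟩
    have h4 : Ring.inverse a = ↑haUnit.unit⁻¹ := by
      conv_lhs => rw [← haUnit.unit_spec]
      rw [Ring.inverse_unit]
    have h3 : Ring.inverse (q a) = q (Ring.inverse a) := by
      calc Ring.inverse (q a)
          = Ring.inverse ↑(Units.map (q : A →* c.Quotient) haUnit.unit) := by
            rw [Units.coe_map, MonoidHom.coe_coe, haUnit.unit_spec]
        _ = ↑(Units.map (q : A →* c.Quotient) haUnit.unit)⁻¹ := Ring.inverse_unit _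
        _ = q ↑haUnit.unit⁻¹ := rfl
        _ = q (Ring.inverse a) := by rw [h4]
    rw [h3]
    exact hUsub haU
  obtain ⟨W₀, hW₀open, hW₀1, hW₀⟩ := key Set.univ Filter.univ_mem
  constructor
  · -- units are open
    rw [← hqm.isOpen_preimage]
    rw [isOpen_iff_mem_nhds]
    intro a ha
    simp only [Set.mem_preimage, Set.mem_setOf_eq] at ha
    obtain ⟨b, hb⟩ := hqsurj ↑ha.unit⁻¹
    have hcont : Continuous fun a' : A => q (a' * b) :=
      hqcont.comp (continuous_mul_right b)
    have hmem : (fun a' : A => q (a' * b)) ⁻¹' W₀ ∈ nhds a := by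
      apply hcont.continuousAt.preimage_mem_nhds
      have : q (a * b) = 1 := by
        rw [map_mul, hb, IsUnit.mul_val_inv]
      rw [this]
      exact hW₀open.mem_nhds hW₀1
    refine Filter.mem_of_superset hmem ?_
    intro a' ha'
    simp only [Set.mem_preimage, Set.mem_setOf_eq] at ha' ⊢
    have hab : IsUnit (q a' * q b) := by rw [← map_mul]; exact (hW₀ _ ha').1
    have hbu : IsUnit (q b) := hb ▸ Units.isUnit _
    have : q a' = (q a' * q b) * ↑hbu.unit⁻¹ := by
      rw [mul_assoc, hbu.mul_val_inv, mul_one]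
    rw [this]
    exact hab.mul (Units.isUnit _)
  · -- inversion continuous at 1
    have h1 : Ring.inverse (1 : c.Quotient) = 1 := Ring.inverse_one _
    rw [ContinuousAt, h1, Filter.tendsto_def]
    intro V hV
    obtain ⟨W, hWopen, hW1, hW⟩ := key V hV
    exact Filter.mem_of_superset (hWopen.mem_nhds hW1) fun x hx => (hW x hx).2
end

section
/- If A is a continuous inverse algebra, then every character (algebra homomorphism) χ: A → 𝕂 is continuous. -/
open Filter Topology Pointwise


/-- If `A` is a CIA over `𝕜 ∈ {ℝ, ℂ}`, then each character `χ : A → 𝕜` is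
continuous. -/
theorem character_of_CIA_continuous
    {𝕜 : Type*} [RCLike 𝕜] {A : Type*} [Ring A] [Algebra 𝕜 A]
    [TopologicalSpace A] [IsTopologicalRing A] [ContinuousSMul 𝕜 A]
    [Module ℝ A] [IsScalarTower ℝ 𝕜 A] [LocallyConvexSpace ℝ A]
    (hA : IsCIA A) (χ : A →ₐ[𝕜] 𝕜) :
    Continuous χ := by
  obtain ⟨hopen, -⟩ := hA
  have hU : {u : A | IsUnit (1 - u)} ∈ 𝓝 (0 : A) := by
    have hop : IsOpen {u : A | IsUnit (1 - u)} :=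
      hopen.preimage (continuous_const.sub continuous_id)
    exact hop.mem_nhds (by simp)
  obtain ⟨V, ⟨hV0, hVbal⟩, hVU⟩ := (nhds_basis_balanced 𝕜 A).mem_iff.mp hU
  -- χ is bounded by 1 on V
  have hbound : ∀ v ∈ V, ‖χ v‖ ≤ 1 := by
    intro v hv
    by_contra h
    push_neg at h
    have hne : χ v ≠ 0 := by
      intro h0
      rw [h0, norm_zero] at h
      linarith
    set c := (χ v)⁻¹ with hc
    have hc1 : ‖c‖ ≤ 1 := by
      rw [hc, norm_inv]
      exact inv_le_one_of_one_le₀ h.le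
    have hw : c • v ∈ V := hVbal c hc1 (Set.smul_mem_smul_set hv)
    have hunit : IsUnit (χ (1 - c • v)) := ((hVU hw : IsUnit _).map χ)
    have : χ (1 - c • v) = 0 := by
      simp [map_sub, hc, smul_eq_mul, inv_mul_cancel₀ hne]
    rw [this] at hunit
    exact not_isUnit_zero hunit
  -- continuity at 0
  have h0 : ContinuousAt χ 0 := by
    rw [ContinuousAt, map_zero, NormedAddCommGroup.tendsto_nhds_zero]
    intro ε hε
    set c : 𝕜 := (RCLike.ofReal (ε / 2) : 𝕜) with hcdef
    have hcnorm : ‖c‖ = ε / 2 := by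
      rw [hcdef, RCLike.norm_ofReal, abs_of_pos (by linarith)]
    have hcne : c ≠ 0 := by
      intro h
      rw [h, norm_zero] at hcnorm
      linarith
    have hmem : c • V ∈ 𝓝 (0 : A) := (set_smul_mem_nhds_zero_iff hcne).mpr hV0
    filter_upwards [hmem] with a ha
    obtain ⟨v, hv, rfl⟩ := ha
    rw [map_smul, smul_eq_mul, norm_mul, hcnorm]
    calc ε / 2 * ‖χ v‖ ≤ ε / 2 * 1 := by
          exact mul_le_mul_of_nonneg_left (hbound v hv) (by linarith)
      _ < ε := by linarith
  exact continuous_of_continuousAt_zero χ h0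
end

section
/- If A is a continuous inverse algebra, then the matrix algebra M_n(A) is a continuous inverse algebra for every n ∈ ℕ. -/
open Matrix Filter Topology

section Schur

variable {l m n : Type*} [Fintype l] [Fintype m] [Fintype n]
  [DecidableEq l] [DecidableEq m] [DecidableEq n]
variable {α : Type*} [Ring α]


def submatrixEquivInvertible' (A : Matrix m m α) (e₁ e₂ : n ≃ m) [Invertible A] :
    Invertible (A.submatrix e₁ e₂) :=
  ⟨(⅟ A).submatrix e₂ e₁,
   by rw [Matrix.submatrix_mul_equiv, invOf_mul_self, submatrix_one_equiv],
   by rw [Matrix.submatrix_mul_equiv, mul_invOf_self, submatrix_one_equiv]⟩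

theorem fromBlocks_eq_of_invertible₁₁' (A : Matrix m m α) (B : Matrix m n α) (C : Matrix l m α)
    (D : Matrix l n α) [Invertible A] :
    fromBlocks A B C D =
      (fromBlocks 1 0 (C * ⅟ A) 1 : Matrix (m ⊕ l) (m ⊕ l) α) * fromBlocks A 0 0 (D - C * ⅟ A * B) *
        (fromBlocks 1 (⅟ A * B) 0 1 : Matrix (m ⊕ n) (m ⊕ n) α) := by
  simp only [fromBlocks_multiply, Matrix.mul_zero, Matrix.zero_mul, add_zero, zero_add,
    Matrix.one_mul, Matrix.mul_one, invOf_mul_self, Matrix.mul_invOf_cancel_left,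
    Matrix.invOf_mul_cancel_right, Matrix.mul_assoc, add_sub_cancel]

set_option maxHeartbeats 1000000 in
theorem fromBlocks_eq_of_invertible₂₂' (A : Matrix l m α) (B : Matrix l n α) (C : Matrix n m α)
    (D : Matrix n n α) [Invertible D] :
    fromBlocks A B C D =
      (fromBlocks 1 (B * ⅟ D) 0 1 : Matrix (l ⊕ n) (l ⊕ n) α) * fromBlocks (A - B * ⅟ D * C) 0 0 D *
        (fromBlocks 1 0 (⅟ D * C) 1 : Matrix (m ⊕ n) (m ⊕ n) α) :=
  (Matrix.reindex (Equiv.sumComm _ _) (Equiv.sumComm _ _)).injective <| by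
    simpa [reindex_apply, Equiv.sumComm_symm, ← submatrix_mul_equiv _ _ _ (Equiv.sumComm n m), ←
      submatrix_mul_equiv _ _ _ (Equiv.sumComm n l), Equiv.sumComm_apply,
      fromBlocks_submatrix_sum_swap_sum_swap] using fromBlocks_eq_of_invertible₁₁' D C B A

def fromBlocksZero₂₁Invertible' (A : Matrix m m α) (B : Matrix m n α) (D : Matrix n n α)
    [Invertible A] [Invertible D] : Invertible (fromBlocks A B 0 D) :=
  ⟨fromBlocks (⅟ A) (-(⅟ A * B * ⅟ D)) 0 (⅟ D), by
    simp_rw [fromBlocks_multiply, Matrix.mul_zero, Matrix.zero_mul, zero_add, add_zero,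
      Matrix.neg_mul, invOf_mul_self, Matrix.invOf_mul_cancel_right, add_neg_cancel,
      fromBlocks_one], by
    simp only [fromBlocks_multiply, Matrix.mul_zero, Matrix.zero_mul, zero_add, add_zero,
      Matrix.mul_neg, ← Matrix.mul_assoc, mul_invOf_self, Matrix.one_mul, neg_add_cancel, neg_zero,
      add_neg_cancel, fromBlocks_one]⟩

def fromBlocksZero₁₂Invertible' (A : Matrix m m α) (C : Matrix n m α) (D : Matrix n n α)
    [Invertible A] [Invertible D] : Invertible (fromBlocks A 0 C D) :=
  ⟨fromBlocks (⅟ A) 0 (-(⅟ D * C * ⅟ A)) (⅟ D), by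
    simp_rw [fromBlocks_multiply, Matrix.mul_zero, Matrix.zero_mul, zero_add, add_zero,
      Matrix.neg_mul, invOf_mul_self, Matrix.invOf_mul_cancel_right, neg_add_cancel,
      fromBlocks_one], by
    simp only [fromBlocks_multiply, Matrix.mul_zero, Matrix.zero_mul, zero_add, add_zero,
      Matrix.mul_neg, ← Matrix.mul_assoc, mul_invOf_self, Matrix.one_mul, neg_add_cancel, neg_zero,
      add_neg_cancel, fromBlocks_one]⟩

def fromBlocks₂₂Invertible' (A : Matrix m m α) (B : Matrix m n α) (C : Matrix n m α)
    (D : Matrix n n α) [Invertible D] [Invertible (A - B * ⅟ D * C)] :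
    Invertible (fromBlocks A B C D) := by
  convert! Invertible.copy' _ _ (fromBlocks (⅟ (A - B * ⅟ D * C)) (-(⅟ (A - B * ⅟ D * C) * B * ⅟ D))
    (-(⅟ D * C * ⅟ (A - B * ⅟ D * C))) (⅟ D + ⅟ D * C * ⅟ (A - B * ⅟ D * C) * B * ⅟ D))
      (fromBlocks_eq_of_invertible₂₂' _ _ _ _) _
  · letI : Invertible (1 : Matrix n n α) := invertibleOne
    letI : Invertible (1 : Matrix m m α) := invertibleOne
    refine Invertible.mul ?_ (fromBlocksZero₁₂Invertible' _ _ _)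
    exact
      Invertible.mul (fromBlocksZero₂₁Invertible' _ _ _)
        (fromBlocksZero₂₁Invertible' _ _ _)
  · show
      _ =
        (fromBlocks 1 0 (-((1 : Matrix n n α) * (⅟ D * C) * (1 : Matrix m m α))) 1 : Matrix (m ⊕ n) (m ⊕ n) α) *
          (fromBlocks (⅟ (A - B * ⅟ D * C)) (-(⅟ (A - B * ⅟ D * C) * (0 : Matrix m n α) * ⅟ D)) 0 (⅟ D) *
            (fromBlocks 1 (-((1 : Matrix m m α) * (B * ⅟ D) * (1 : Matrix n n α))) 0 1 : Matrix (m ⊕ n) (m ⊕ n) α))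
    simp only [fromBlocks_multiply, invOf_one, Matrix.one_mul, Matrix.mul_one, Matrix.zero_mul,
      Matrix.mul_zero, add_zero, zero_add, neg_zero, Matrix.mul_neg, Matrix.neg_mul, neg_neg, ←
      Matrix.mul_assoc, add_comm (⅟D)]

def fromBlocks₁₁Invertible' (A : Matrix m m α) (B : Matrix m n α) (C : Matrix n m α)
    (D : Matrix n n α) [Invertible A] [Invertible (D - C * ⅟ A * B)] :
    Invertible (fromBlocks A B C D) := by
  letI := fromBlocks₂₂Invertible' D C B A
  letI iDCBA :=
    submatrixEquivInvertible' (fromBlocks D C B A) (Equiv.sumComm _ _) (Equiv.sumComm _ _)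
  exact
    iDCBA.copy' _
      (fromBlocks (⅟ A + ⅟ A * B * ⅟ (D - C * ⅟ A * B) * C * ⅟ A) (-(⅟ A * B * ⅟ (D - C * ⅟ A * B)))
        (-(⅟ (D - C * ⅟ A * B) * C * ⅟ A)) (⅟ (D - C * ⅟ A * B)))
      (fromBlocks_submatrix_sum_swap_sum_swap _ _ _ _).symm
      (fromBlocks_submatrix_sum_swap_sum_swap _ _ _ _).symm

theorem invOf_fromBlocks₁₁_eq' (A : Matrix m m α) (B : Matrix m n α) (C : Matrix n m α)
    (D : Matrix n n α) [Invertible A] [Invertible (D - C * ⅟ A * B)]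
    [Invertible (fromBlocks A B C D)] :
    ⅟ (fromBlocks A B C D) =
      fromBlocks (⅟ A + ⅟ A * B * ⅟ (D - C * ⅟ A * B) * C * ⅟ A) (-(⅟ A * B * ⅟ (D - C * ⅟ A * B)))
        (-(⅟ (D - C * ⅟ A * B) * C * ⅟ A)) (⅟ (D - C * ⅟ A * B)) := by
  letI := fromBlocks₁₁Invertible' A B C D
  convert! (rfl : ⅟ (fromBlocks A B C D) = _)

end Schur

section Topology

variable {X : Type*} [TopologicalSpace X]
variable {l m n o : Type*} {R : Type*} [TopologicalSpace R]

theorem ContinuousAt.matrix_mul' [Fintype n] [Mul R] [AddCommMonoid R] [ContinuousAdd R]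
    [ContinuousMul R] {f : X → Matrix m n R} {g : X → Matrix n o R} {x : X}
    (hf : ContinuousAt f x) (hg : ContinuousAt g x) :
    ContinuousAt (fun x => f x * g x) x :=
  ((continuous_fst.matrix_mul continuous_snd).continuousAt).comp (hf.prodMk hg)

theorem continuousAt_fromBlocks {x : X} {f1 : X → Matrix n l R} {f2 : X → Matrix n m R}
    {f3 : X → Matrix o l R} {f4 : X → Matrix o m R} (h1 : ContinuousAt f1 x)
    (h2 : ContinuousAt f2 x) (h3 : ContinuousAt f3 x) (h4 : ContinuousAt f4 x) :
    ContinuousAt (fun y => fromBlocks (f1 y) (f2 y) (f3 y) (f4 y)) x := by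
  apply continuousAt_pi'
  intro i
  apply continuousAt_pi'
  intro j
  cases i with
  | inl i =>
    cases j with
    | inl j =>
      exact (((continuous_apply j).comp (continuous_apply i)).continuousAt).comp h1
    | inr j =>
      exact (((continuous_apply j).comp (continuous_apply i)).continuousAt).comp h2
  | inr i =>
    cases j with
    | inl j =>
      exact (((continuous_apply j).comp (continuous_apply i)).continuousAt).comp h3
    | inr j =>
      exact (((continuous_apply j).comp (continuous_apply i)).continuousAt).comp h4

theorem continuous_toBlocks₁₁ : Continuous (toBlocks₁₁ : Matrix (n ⊕ o) (l ⊕ m) R → _) :=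
  continuous_matrix fun i j => by exact ((continuous_apply (Sum.inl j)).comp
    (continuous_apply (Sum.inl i)) : Continuous fun a : Matrix (n ⊕ o) (l ⊕ m) R => _)

theorem continuous_toBlocks₁₂ : Continuous (toBlocks₁₂ : Matrix (n ⊕ o) (l ⊕ m) R → _) :=
  continuous_matrix fun i j => by exact ((continuous_apply (Sum.inr j)).comp
    (continuous_apply (Sum.inl i)) : Continuous fun a : Matrix (n ⊕ o) (l ⊕ m) R => _)

theorem continuous_toBlocks₂₁ : Continuous (toBlocks₂₁ : Matrix (n ⊕ o) (l ⊕ m) R → _) :=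
  continuous_matrix fun i j => by exact ((continuous_apply (Sum.inl j)).comp
    (continuous_apply (Sum.inr i)) : Continuous fun a : Matrix (n ⊕ o) (l ⊕ m) R => _)

theorem continuous_toBlocks₂₂ : Continuous (toBlocks₂₂ : Matrix (n ⊕ o) (l ⊕ m) R → _) :=
  continuous_matrix fun i j => by exact ((continuous_apply (Sum.inr j)).comp
    (continuous_apply (Sum.inr i)) : Continuous fun a : Matrix (n ⊕ o) (l ⊕ m) R => _)

end Topology

section CIA

/-- In a topological ring, if the units form a neighbourhood of `1`, they form an open set. -/
theorem isOpen_isUnit_of_mem_nhds {R : Type*} [Ring R] [TopologicalSpace R] [IsTopologicalRing R]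
    (h : {a : R | IsUnit a} ∈ 𝓝 (1 : R)) : IsOpen {a : R | IsUnit a} := by
  rw [isOpen_iff_mem_nhds]
  rintro x hx
  obtain ⟨u, rfl⟩ := hx
  have hc : ContinuousAt (fun y : R => (↑u⁻¹ : R) * y) ↑u :=
    (continuous_const.mul continuous_id).continuousAt
  have hmem : (fun y : R => (↑u⁻¹ : R) * y) ⁻¹' {a | IsUnit a} ∈ 𝓝 (u : R) := by
    apply hc.preimage_mem_nhds
    simpa using h
  refine Filter.mem_of_superset hmem fun y hy => ?_
  have := u.isUnit.mul hy
  simpa [← mul_assoc] using this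

/-- `IsCIA` transfers along continuous ring isomorphisms. -/
theorem IsCIA.congr {R S : Type*} [Ring R] [Ring S] [TopologicalSpace R] [TopologicalSpace S]
    (e : R ≃+* S) (hc : Continuous e) (hc' : Continuous e.symm) (h : IsCIA R) : IsCIA S := by
  have key : ∀ s : S, Ring.inverse s = e (Ring.inverse (e.symm s)) := by
    intro s
    by_cases hs : IsUnit s
    · obtain ⟨u, rfl⟩ := hs
      have hu : IsUnit (e.symm (u : S)) := u.isUnit.map e.symm
      obtain ⟨v, hv⟩ := hu
      rw [Ring.inverse_unit, ← hv, Ring.inverse_unit]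
      have hev : e (v : R) = (u : S) := by rw [hv, RingEquiv.apply_symm_apply]
      have h1 : (u : S) * e (↑v⁻¹ : R) = 1 := by
        rw [← hev, ← _root_.map_mul, Units.mul_inv, _root_.map_one]
      exact Units.inv_eq_of_mul_eq_one_right h1
    · have hs' : ¬IsUnit (e.symm s) := fun hcon => hs (by simpa using hcon.map e)
      rw [Ring.inverse_non_unit _ hs, Ring.inverse_non_unit _ hs', map_zero]
  constructor
  · have hset : {s : S | IsUnit s} = e.symm ⁻¹' {r : R | IsUnit r} := by
      ext s
      constructor
      · exact fun hs => hs.map e.symm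
      · intro hs
        simpa using hs.map e
    rw [hset]
    exact h.1.preimage hc'
  · have hfun : (Ring.inverse : S → S) = fun s => e (Ring.inverse (e.symm s)) := funext key
    rw [hfun]
    have h1 : e.symm (1 : S) = 1 := map_one _
    have hmid : ContinuousAt (Ring.inverse : R → R) (e.symm (1 : S)) := by
      rw [h1]; exact h.2
    have : ContinuousAt (⇑e ∘ Ring.inverse ∘ ⇑e.symm) 1 :=
      ContinuousAt.comp hc.continuousAt (hmid.comp hc'.continuousAt)
    exact this

end CIA

section Step

variable {A : Type*} [Ring A] [TopologicalSpace A] [IsTopologicalRing A]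
variable {m k : Type*} [Fintype m] [Fintype k] [DecidableEq m] [DecidableEq k]

/-- The Schur complement of the top-left block, using `Ring.inverse`. -/
noncomputable def schurC (M : Matrix (m ⊕ k) (m ⊕ k) A) : Matrix k k A :=
  M.toBlocks₂₂ - M.toBlocks₂₁ * Ring.inverse M.toBlocks₁₁ * M.toBlocks₁₂

/-- Candidate inverse of a block matrix via the Schur complement. -/
noncomputable def schurInv (M : Matrix (m ⊕ k) (m ⊕ k) A) : Matrix (m ⊕ k) (m ⊕ k) A :=
  fromBlocks
    (Ring.inverse M.toBlocks₁₁ +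
      Ring.inverse M.toBlocks₁₁ * M.toBlocks₁₂ * Ring.inverse (schurC M) * M.toBlocks₂₁ *
        Ring.inverse M.toBlocks₁₁)
    (-(Ring.inverse M.toBlocks₁₁ * M.toBlocks₁₂ * Ring.inverse (schurC M)))
    (-(Ring.inverse (schurC M) * M.toBlocks₂₁ * Ring.inverse M.toBlocks₁₁))
    (Ring.inverse (schurC M))

theorem schur_key (M : Matrix (m ⊕ k) (m ⊕ k) A) (hMa : IsUnit M.toBlocks₁₁)
    (hMS : IsUnit (schurC M)) : IsUnit M ∧ Ring.inverse M = schurInv M := by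
  letI iA : Invertible M.toBlocks₁₁ := hMa.invertible
  have hinva : Ring.inverse M.toBlocks₁₁ = ⅟M.toBlocks₁₁ := Ring.inverse_invertible _
  have hSalt : schurC M = M.toBlocks₂₂ - M.toBlocks₂₁ * ⅟M.toBlocks₁₁ * M.toBlocks₁₂ := by
    rw [schurC, hinva]
  letI iS : Invertible (M.toBlocks₂₂ - M.toBlocks₂₁ * ⅟M.toBlocks₁₁ * M.toBlocks₁₂) :=
    (hSalt ▸ hMS).invertible
  letI iF : Invertible (fromBlocks M.toBlocks₁₁ M.toBlocks₁₂ M.toBlocks₂₁ M.toBlocks₂₂) :=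
    fromBlocks₁₁Invertible' _ _ _ _
  have hinvS : Ring.inverse (schurC M) =
      ⅟(M.toBlocks₂₂ - M.toBlocks₂₁ * ⅟M.toBlocks₁₁ * M.toBlocks₁₂) := by
    rw [hSalt]; exact Ring.inverse_invertible _
  have hW := invOf_fromBlocks₁₁_eq' M.toBlocks₁₁ M.toBlocks₁₂ M.toBlocks₂₁ M.toBlocks₂₂
  have h1 := mul_invOf_self (fromBlocks M.toBlocks₁₁ M.toBlocks₁₂ M.toBlocks₂₁ M.toBlocks₂₂)
  have h2 := invOf_mul_self (fromBlocks M.toBlocks₁₁ M.toBlocks₁₂ M.toBlocks₂₁ M.toBlocks₂₂)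
  rw [hW, fromBlocks_toBlocks] at h1 h2
  refine ⟨⟨⟨M, _, h1, h2⟩, rfl⟩, ?_⟩
  have hri : Ring.inverse M = _ := Ring.inverse_unit ⟨M, _, h1, h2⟩
  rw [hri, schurInv, hinva, hinvS]
  rfl

theorem isCIA_matrix_sum (hm : IsCIA (Matrix m m A)) (hk : IsCIA (Matrix k k A)) :
    IsCIA (Matrix (m ⊕ k) (m ⊕ k) A) := by
  have ha1 : (toBlocks₁₁ : Matrix (m ⊕ k) (m ⊕ k) A → _) 1 = 1 := by
    rw [← fromBlocks_one, toBlocks_fromBlocks₁₁]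
  have hb1 : (toBlocks₁₂ : Matrix (m ⊕ k) (m ⊕ k) A → _) 1 = 0 := by
    rw [← fromBlocks_one, toBlocks_fromBlocks₁₂]
  have hc1 : (toBlocks₂₁ : Matrix (m ⊕ k) (m ⊕ k) A → _) 1 = 0 := by
    rw [← fromBlocks_one, toBlocks_fromBlocks₂₁]
  have hd1 : (toBlocks₂₂ : Matrix (m ⊕ k) (m ⊕ k) A → _) 1 = 1 := by
    rw [← fromBlocks_one, toBlocks_fromBlocks₂₂]
  -- continuity of the various ingredients at 1
  have hia : ContinuousAt (fun M : Matrix (m ⊕ k) (m ⊕ k) A => Ring.inverse M.toBlocks₁₁) 1 := by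
    have h2 : ContinuousAt (Ring.inverse : Matrix m m A → _)
        ((1 : Matrix (m ⊕ k) (m ⊕ k) A).toBlocks₁₁) := by rw [ha1]; exact hm.2
    exact h2.comp continuous_toBlocks₁₁.continuousAt
  have hia1 : Ring.inverse ((1 : Matrix (m ⊕ k) (m ⊕ k) A).toBlocks₁₁) = 1 := by
    rw [ha1, Ring.inverse_one]
  have hS : ContinuousAt (schurC : Matrix (m ⊕ k) (m ⊕ k) A → _) 1 := by
    exact (continuous_toBlocks₂₂.continuousAt).sub
      ((continuous_toBlocks₂₁.continuousAt.matrix_mul' hia).matrix_mul'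
        continuous_toBlocks₁₂.continuousAt)
  have hS1 : schurC (1 : Matrix (m ⊕ k) (m ⊕ k) A) = 1 := by
    rw [schurC, hc1, hd1, Matrix.zero_mul, Matrix.zero_mul, sub_zero]
  have hiS : ContinuousAt (fun M : Matrix (m ⊕ k) (m ⊕ k) A => Ring.inverse (schurC M)) 1 := by
    have h2 : ContinuousAt (Ring.inverse : Matrix k k A → _)
        (schurC (1 : Matrix (m ⊕ k) (m ⊕ k) A)) := by rw [hS1]; exact hk.2
    exact h2.comp hS
  have hf : ContinuousAt (schurInv : Matrix (m ⊕ k) (m ⊕ k) A → _) 1 := by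
    apply continuousAt_fromBlocks
    · exact hia.add ((((hia.matrix_mul' continuous_toBlocks₁₂.continuousAt).matrix_mul'
        hiS).matrix_mul' continuous_toBlocks₂₁.continuousAt).matrix_mul' hia)
    · exact ((hia.matrix_mul' continuous_toBlocks₁₂.continuousAt).matrix_mul' hiS).neg
    · exact ((hiS.matrix_mul' continuous_toBlocks₂₁.continuousAt).matrix_mul' hia).neg
    · exact hiS
  have hf1 : schurInv (1 : Matrix (m ⊕ k) (m ⊕ k) A) = 1 := by
    rw [schurInv, hia1, hb1, hc1, hS1, Ring.inverse_one]
    simp [fromBlocks_one]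
  -- the eventual statement
  have hUa : ∀ᶠ M : Matrix (m ⊕ k) (m ⊕ k) A in 𝓝 1, IsUnit M.toBlocks₁₁ := by
    have : {N : Matrix m m A | IsUnit N} ∈ 𝓝 ((1 : Matrix (m ⊕ k) (m ⊕ k) A).toBlocks₁₁) := by
      rw [ha1]; exact hm.1.mem_nhds isUnit_one
    exact continuous_toBlocks₁₁.continuousAt.preimage_mem_nhds this
  have hUS : ∀ᶠ M : Matrix (m ⊕ k) (m ⊕ k) A in 𝓝 1, IsUnit (schurC M) := by
    have : {N : Matrix k k A | IsUnit N} ∈ 𝓝 (schurC (1 : Matrix (m ⊕ k) (m ⊕ k) A)) := by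
      rw [hS1]; exact hk.1.mem_nhds isUnit_one
    exact hS.preimage_mem_nhds this
  have key : ∀ᶠ M : Matrix (m ⊕ k) (m ⊕ k) A in 𝓝 1,
      IsUnit M ∧ Ring.inverse M = schurInv M := by
    filter_upwards [hUa, hUS] with M hMa hMS
    exact schur_key M hMa hMS
  constructor
  · apply isOpen_isUnit_of_mem_nhds
    exact (key.mono fun M h => h.1)
  · have heq : (schurInv : Matrix (m ⊕ k) (m ⊕ k) A → _) =ᶠ[𝓝 1] Ring.inverse :=
      key.mono fun M h => h.2.symm
    have : ContinuousAt (Ring.inverse : Matrix (m ⊕ k) (m ⊕ k) A → _) 1 := hf.congr heq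
    simpa [Ring.inverse_one, hf1] using this

end Step

/-- If `A` is a continuous inverse algebra, then the matrix algebra `Mₙ(A)` is a
continuous inverse algebra for every `n ∈ ℕ`. -/
theorem isCIA_matrix
    {A : Type*} [Ring A] [Algebra ℂ A] [TopologicalSpace A] [IsTopologicalRing A]
    [ContinuousSMul ℂ A] [LocallyConvexSpace ℝ A]
    (hA : IsCIA A) :
    ∀ n : ℕ, IsCIA (Matrix (Fin n) (Fin n) A) := by
  -- the 1×1 case
  have h1 : IsCIA (Matrix (Fin 1) (Fin 1) A) := by
    refine IsCIA.congr (R := A) ?_ ?_ ?_ hA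
    · exact
        { toFun := fun a => Matrix.of fun _ _ => a
          invFun := fun M => M 0 0
          left_inv := fun a => rfl
          right_inv := fun M => by
            ext i j
            rw [Subsingleton.elim i 0, Subsingleton.elim j 0]
            rfl
          map_mul' := fun x y => by
            ext i j
            simp [Matrix.mul_apply, Fin.sum_univ_one]
          map_add' := fun x y => by
            ext i j
            simp }
    · exact continuous_matrix fun _ _ => continuous_id
    · exact (continuous_apply (0 : Fin 1)).comp (continuous_apply (0 : Fin 1))
  intro n
  induction n with
  | zero =>
    have hall : ∀ M : Matrix (Fin 0) (Fin 0) A, IsUnit M := fun M => by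
      rw [Subsingleton.elim M 1]; exact isUnit_one
    constructor
    · have : {M : Matrix (Fin 0) (Fin 0) A | IsUnit M} = Set.univ :=
        Set.eq_univ_of_forall hall
      rw [this]; exact isOpen_univ
    · have : (Ring.inverse : Matrix (Fin 0) (Fin 0) A → _) = fun _ => 1 :=
        funext fun M => Subsingleton.elim _ _
      rw [this]; exact continuousAt_const
  | succ n ih =>
    have hsum : IsCIA (Matrix (Fin n ⊕ Fin 1) (Fin n ⊕ Fin 1) A) := isCIA_matrix_sum ih h1
    refine IsCIA.congr (R := Matrix (Fin n ⊕ Fin 1) (Fin n ⊕ Fin 1) A) ?_ ?_ ?_ hsum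
    · exact (Matrix.reindexAlgEquiv ℂ A (finSumFinEquiv : Fin n ⊕ Fin 1 ≃ Fin (n + 1))).toRingEquiv
    · have : ⇑(Matrix.reindexAlgEquiv ℂ A
          (finSumFinEquiv : Fin n ⊕ Fin 1 ≃ Fin (n + 1))).toRingEquiv =
          fun M : Matrix (Fin n ⊕ Fin 1) (Fin n ⊕ Fin 1) A =>
            M.submatrix finSumFinEquiv.symm finSumFinEquiv.symm := by
        funext M
        simp [Matrix.reindexAlgEquiv_apply, Matrix.reindex_apply]
      rw [this]
      exact continuous_id.matrix_submatrix _ _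
    · have : ⇑(Matrix.reindexAlgEquiv ℂ A
          (finSumFinEquiv : Fin n ⊕ Fin 1 ≃ Fin (n + 1))).toRingEquiv.symm =
          fun M : Matrix (Fin (n + 1)) (Fin (n + 1)) A =>
            M.submatrix finSumFinEquiv finSumFinEquiv := by
        funext M
        rfl
      rw [this]
      exact continuous_id.matrix_submatrix _ _
end

section
/- Let A be a complex continuous inverse algebra and a ∈ A with spectral radius r_A(a) < 1. Then the Neumann series ∑_{n=0}^∞ aⁿ converges in A (provided A is complete) and its sum equals (1_A − a)^{-1}; in particular 1_A − a is invertible. -/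
open Filter Metric Set Complex


theorem continuousAt_ringInverse {A : Type*} [Ring A] [TopologicalSpace A] [IsTopologicalRing A]
    (hA : IsCIA A) {x : A} (hx : IsUnit x) : ContinuousAt (Ring.inverse : A → A) x := by
  obtain ⟨u, rfl⟩ := hx
  have hcont : ContinuousAt (fun y : A => Ring.inverse ((↑u⁻¹ : A) * y) * (↑u⁻¹ : A)) ↑u := by
    have h1 : ContinuousAt (fun y : A => (↑u⁻¹ : A) * y) (↑u : A) :=
      (continuous_const.mul continuous_id).continuousAt
    have h2 : ContinuousAt (Ring.inverse : A → A) ((↑u⁻¹ : A) * ↑u) := by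
      rw [Units.inv_mul]; exact hA.2
    exact (h2.comp h1).mul continuousAt_const
  refine hcont.congr ?_
  have hmem : {y : A | IsUnit y} ∈ nhds (↑u : A) := hA.1.mem_nhds u.isUnit
  filter_upwards [hmem] with y hy
  obtain ⟨v, rfl⟩ := hy
  have h3 : (↑u⁻¹ : A) * ↑v = ↑(u⁻¹ * v) := rfl
  rw [Ring.inverse_unit, h3, Ring.inverse_unit, mul_inv_rev, inv_inv]
  simp [mul_assoc]

theorem exists_functional {A : Type*} [Ring A] [Algebra ℂ A] [TopologicalSpace A]
    [IsTopologicalRing A] (p : Seminorm ℂ A) (hp : Continuous p) (x₀ : A) :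
    ∃ ψ : A →ₗ[ℂ] ℂ, Continuous ψ ∧ (ψ x₀).re = p x₀ ∧ ∀ x, ‖ψ x‖ ≤ p x := by
  rcases eq_or_ne x₀ 0 with rfl | hx₀
  · exact ⟨0, continuous_const, by simp, fun x => by simp [apply_nonneg]⟩
  set f := LinearPMap.mkSpanSingleton (K := ℝ) (σ := RingHom.id ℝ) x₀ ((p x₀ : ℝ)) hx₀ with hf
  have hbd : ∀ x : f.domain, f x ≤ p x := by
    rintro ⟨x, hx⟩
    obtain ⟨c, rfl⟩ := Submodule.mem_span_singleton.1 hx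
    rw [LinearPMap.mkSpanSingleton'_apply]
    have hps : p (c • x₀) = |c| * p x₀ := by
      rw [← Complex.coe_smul, map_smul_eq_mul]
      simp
    rw [hps, smul_eq_mul]
    exact mul_le_mul_of_nonneg_right (le_abs_self c) (apply_nonneg p x₀)
  obtain ⟨φ, hφeq, hφle⟩ := exists_extension_of_le_sublinear f (fun x => p x)
    (fun c hc x => by
      show p (c • x) = c * p x
      rw [← Complex.coe_smul, map_smul_eq_mul]
      simp [abs_of_pos hc])
    (fun x y => map_add_le_add p x y) hbd
  have hφabs : ∀ x, |φ x| ≤ p x := by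
    intro x
    refine abs_le.2 ⟨?_, hφle x⟩
    have := hφle (-x)
    rw [map_neg] at this
    simp only [map_neg_eq_map] at this
    linarith
  set ψ := LinearMap.extendTo𝕜' (𝕜 := ℂ) φ with hψ
  have hψre : ∀ x, (ψ x).re = φ x := by
    intro x
    rw [hψ]
    exact Module.Dual.re_extendRCLike_apply (𝕜 := ℂ) φ x
  have hψabs : ∀ x, ‖ψ x‖ ≤ p x := by
    intro x
    rcases eq_or_ne (ψ x) 0 with h | h
    · simp [h, apply_nonneg]
    have hnorm : (‖ψ x‖ : ℝ) = (ψ (((‖ψ x‖ : ℂ) / ψ x) • x)).re := by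
      rw [map_smul, smul_eq_mul, div_mul_cancel₀ _ h, Complex.ofReal_re]
    rw [hnorm, hψre]
    calc φ (((‖ψ x‖ : ℂ) / ψ x) • x) ≤ p (((‖ψ x‖ : ℂ) / ψ x) • x) := hφle _
      _ = ‖(‖ψ x‖ : ℂ) / ψ x‖ * p x := map_smul_eq_mul p _ x
      _ = p x := by
          rw [norm_div, Complex.norm_real, norm_norm, div_self, one_mul]
          simpa using h
  refine ⟨ψ, ?_, ?_, hψabs⟩
  · rw [continuous_iff_continuousAt]
    intro x
    rw [ContinuousAt, tendsto_iff_norm_sub_tendsto_zero]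
    have hle : ∀ y, ‖ψ y - ψ x‖ ≤ p (y - x) := fun y => by rw [← map_sub]; exact hψabs _
    refine squeeze_zero (fun y => norm_nonneg _) hle ?_
    have h1 : Tendsto (fun y : A => y - x) (nhds x) (nhds 0) := by
      simpa using (continuous_sub_right x).tendsto' x 0 (sub_self x)
    have h2 := (hp.tendsto 0).comp h1
    simpa [Function.comp_def] using h2
  · rw [hψre]
    have := hφeq ⟨x₀, Submodule.mem_span_singleton_self x₀⟩
    rw [this]
    exact LinearPMap.mkSpanSingleton_apply ℝ ℝ hx₀ _

theorem circleIntegral_add' {f g : ℂ → ℂ} {c : ℂ} {R : ℝ} (hf : CircleIntegrable f c R)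
    (hg : CircleIntegrable g c R) :
    (∮ z in C(c, R), (f z + g z)) = (∮ z in C(c, R), f z) + ∮ z in C(c, R), g z := by
  simp only [circleIntegral, smul_add, intervalIntegral.integral_add hf.out hg.out]

/-- Let `A` be a complete complex CIA and `a ∈ A` with spectral radius
`r_A(a) < 1`. Then the Neumann series `∑ aⁿ` converges in `A` and its sum is an
inverse of `1 - a`; in particular `1 - a` is invertible. -/
theorem neumann_series_of_spectralRadius_lt_one
    {A : Type*} [Ring A] [Algebra ℂ A] [UniformSpace A] [IsUniformAddGroup A]
    [IsTopologicalRing A] [ContinuousSMul ℂ A] [LocallyConvexSpace ℝ A] [CompleteSpace A]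
    (hA : IsCIA A) (a : A)
    (hr : ∃ r : ℝ, r < 1 ∧ ∀ lam ∈ spectrum ℂ a, ‖lam‖ ≤ r) :
    ∃ b : A,
      Filter.Tendsto (fun N : ℕ => ∑ n ∈ Finset.range N, a ^ n) Filter.atTop (nhds b) ∧
      (1 - a) * b = 1 ∧ b * (1 - a) = 1 ∧ IsUnit (1 - a) := by
  obtain ⟨r, hr1, hr2⟩ := hr
  -- normalized spectral bound
  set r₀ : ℝ := max r (1/2) with hr₀def
  have hr₀pos : 0 < r₀ := lt_of_lt_of_le (by norm_num) (le_max_right _ _)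
  have hr₀lt : r₀ < 1 := max_lt hr1 (by norm_num)
  have hspec : ∀ lam ∈ spectrum ℂ a, ‖lam‖ ≤ r₀ := fun lam h => (hr2 lam h).trans (le_max_left _ _)
  -- units
  have hunit : ∀ z : ℂ, ‖z‖ * r₀ < 1 → IsUnit (1 - z • a) := by
    intro z hz
    rcases eq_or_ne z 0 with rfl | hz0
    · simp
    have hzinv : (z⁻¹ : ℂ) ∉ spectrum ℂ a := by
      intro hmem
      have h1 := hspec _ hmem
      rw [norm_inv] at h1
      have h2 : 0 < ‖z‖ := norm_pos_iff.2 hz0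
      have h3 := mul_le_mul_of_nonneg_left h1 h2.le
      rw [mul_inv_cancel₀ h2.ne'] at h3
      linarith
    have hu : IsUnit (algebraMap ℂ A z⁻¹ - a) := spectrum.notMem_iff.mp hzinv
    have heq : 1 - z • a = z • (algebraMap ℂ A z⁻¹ - a) := by
      rw [smul_sub, Algebra.algebraMap_eq_smul_one, smul_smul, mul_inv_cancel₀ hz0, one_smul]
    rw [heq, Algebra.smul_def]
    exact ((isUnit_iff_ne_zero.2 hz0).map (algebraMap ℂ A)).mul hu
  -- choice of radius
  set s : ℝ := (1 + r₀⁻¹)/2 with hsdef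
  have hr₀inv : 1 < r₀⁻¹ := by
    rw [lt_inv_comm₀ one_pos hr₀pos]
    simpa using hr₀lt
  have hs1 : 1 < s := by rw [hsdef]; linarith
  have hs0 : 0 < s := lt_trans one_pos hs1
  have hsr : s * r₀ < 1 := by
    have h : s < r₀⁻¹ := by rw [hsdef]; linarith
    calc s * r₀ < r₀⁻¹ * r₀ := mul_lt_mul_of_pos_right h hr₀pos
      _ = 1 := inv_mul_cancel₀ hr₀pos.ne'
  have hgood : ∀ z : ℂ, ‖z‖ ≤ s → ‖z‖ * r₀ < 1 := fun z hz =>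
    lt_of_le_of_lt (mul_le_mul_of_nonneg_right hz hr₀pos.le) hsr
  -- the resolvent-type function
  set Res : ℂ → A := fun z => Ring.inverse (1 - z • a) with hResdef
  have hResL : ∀ z : ℂ, ‖z‖ * r₀ < 1 → (1 - z • a) * Res z = 1 := fun z hz =>
    Ring.mul_inverse_cancel _ (hunit z hz)
  have hResR : ∀ z : ℂ, ‖z‖ * r₀ < 1 → Res z * (1 - z • a) = 1 := fun z hz =>
    Ring.inverse_mul_cancel _ (hunit z hz)
  have hRes0 : Res 0 = 1 := by rw [hResdef]; simp
  have hRescontAt : ∀ z : ℂ, ‖z‖ * r₀ < 1 → ContinuousAt Res z := by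
    intro z hz
    have h1 : ContinuousAt (fun w : ℂ => 1 - w • a) z :=
      (continuous_const.sub (continuous_id.smul continuous_const)).continuousAt
    exact ContinuousAt.comp (g := (Ring.inverse : A → A))
      (continuousAt_ringInverse hA (hunit z hz)) h1
  have hResdiff : ∀ z w : ℂ, ‖z‖ * r₀ < 1 → ‖w‖ * r₀ < 1 →
      Res w - Res z = (w - z) • (Res w * (a * Res z)) := by
    intro z w hz hw
    have e1 : Res w * ((1 - z • a) - (1 - w • a)) * Res z = Res w - Res z := by
      rw [mul_sub, sub_mul, mul_assoc (Res w) (1 - z • a) (Res z), hResL z hz, mul_one,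
        hResR w hw, one_mul]
    have e2 : (1 - z • a) - (1 - w • a) = (w - z) • a := by
      rw [sub_smul]; abel
    rw [← e1, e2, mul_smul_comm, smul_mul_assoc, mul_assoc]
  -- geometric-series remainder identity for the resolvent
  have hResgeom : ∀ (j : ℕ) (z : ℂ), ‖z‖ * r₀ < 1 →
      a ^ j * Res z = a ^ j + z • (a ^ (j + 1) * Res z) := by
    intro j z hz
    have h2 : Res z - z • (a * Res z) = 1 := by
      have h3 := hResL z hz
      rwa [sub_mul, one_mul, smul_mul_assoc] at h3
    have h1 : Res z = 1 + z • (a * Res z) := by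
      rw [← h2]; abel
    calc a ^ j * Res z = a ^ j * (1 + z • (a * Res z)) := by rw [← h1]
      _ = a ^ j + z • (a ^ (j + 1) * Res z) := by
          rw [mul_add, mul_one, mul_smul_comm, ← mul_assoc, ← pow_succ]
  haveI : ContinuousSMul ℝ A := IsScalarTower.continuousSMul ℂ
  -- Key step: aⁿ → 0
  have hpow : Tendsto (fun n : ℕ => a ^ n) atTop (nhds (0 : A)) := by
    rw [Filter.tendsto_def]
    intro U hU
    have hex : ∃ W : Set A, (W ∈ nhds (0:A) ∧ Balanced ℂ W ∧ Convex ℝ W) ∧ W ⊆ U := by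
      obtain ⟨V, ⟨hV, hVc⟩, hVU⟩ := (LocallyConvexSpace.convex_basis_zero ℝ A).mem_iff.1 hU
      refine ⟨convexHull ℝ (balancedCore ℂ V), ⟨?_, ?_, convex_convexHull ℝ _⟩,
        (convexHull_min (balancedCore_subset V) hVc).trans hVU⟩
      · exact Filter.mem_of_superset (balancedCore_mem_nhds_zero hV) (subset_convexHull ℝ _)
      · intro c hc
        open Pointwise in
        have hlin : c • convexHull ℝ (balancedCore ℂ V) = convexHull ℝ (c • balancedCore ℂ V) := by
          have := ((c • LinearMap.id : A →ₗ[ℂ] A).restrictScalars ℝ).image_convexHull (balancedCore ℂ V)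
          simpa [Set.image_smul] using this
        rw [hlin]
        exact convexHull_mono (balancedCore_balanced V c hc)
    obtain ⟨W, ⟨hWnhds, hWbal, hWconv⟩, hWU⟩ := hex
    have habs : Absorbent ℝ W := absorbent_nhds_zero hWnhds
    set p : Seminorm ℂ A := gaugeSeminorm hWbal hWconv habs with hpdef
    have hpcont : Continuous p := by
      have hgg : (⇑p : A → ℝ) = gauge W := rfl
      rw [hgg]
      exact continuous_gauge hWconv hWnhds
    have hsph : (sphere (0:ℂ) s).Nonempty := NormedSpace.sphere_nonempty.2 hs0.le
    have hRescont_sph : ContinuousOn (fun z => p (Res z)) (sphere (0:ℂ) s) := by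
      intro z hz
      have hz' : ‖z‖ * r₀ < 1 := hgood z (le_of_eq (mem_sphere_zero_iff_norm.1 hz))
      exact (hpcont.continuousAt.comp (hRescontAt z hz')).continuousWithinAt
    obtain ⟨z₀, hz₀, hmax'⟩ := (isCompact_sphere (0:ℂ) s).exists_isMaxOn hsph hRescont_sph
    have hmax : ∀ z ∈ sphere (0:ℂ) s, p (Res z) ≤ p (Res z₀) := fun z hz => hmax' hz
    set M : ℝ := p (Res z₀) with hMdef
    have hM0 : (0:ℝ) ≤ M := apply_nonneg p _
    have hbound : ∀ n : ℕ, p (a ^ n) ≤ M * s⁻¹ ^ n := by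
      intro n
      obtain ⟨ψ, hψcont, hψre, hψabs⟩ := exists_functional p hpcont (a ^ n)
      set H : ℕ → ℂ → ℂ := fun j z => ψ (a ^ j * Res z) with hHdef
      have hHrec : ∀ (j : ℕ) (z : ℂ), ‖z‖ * r₀ < 1 → H j z = ψ (a ^ j) + z * H (j+1) z := by
        intro j z hz
        show ψ (a ^ j * Res z) = ψ (a ^ j) + z * ψ (a ^ (j+1) * Res z)
        rw [hResgeom j z hz, map_add, map_smul, smul_eq_mul]
      have hHcontAt : ∀ (j : ℕ) (z : ℂ), ‖z‖ * r₀ < 1 → ContinuousAt (H j) z := by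
        intro j z hz
        have h1 : ContinuousAt (fun w : ℂ => a ^ j * Res w) z :=
          (continuous_const.mul continuous_id).continuousAt.comp (hRescontAt z hz)
        exact hψcont.continuousAt.comp h1
      have hHcont : ∀ (j : ℕ), ContinuousOn (H j) (closedBall (0:ℂ) s) := by
        intro j z hz
        exact (hHcontAt j z (hgood z (mem_closedBall_zero_iff.1 hz))).continuousWithinAt
      have hHderiv : ∀ (j : ℕ) (z : ℂ), z ∈ ball (0:ℂ) s →
          HasDerivAt (H j) (ψ (a ^ j * (Res z * (a * Res z)))) z := by
        intro j z hz
        have hz' : ‖z‖ * r₀ < 1 := hgood z (le_of_lt (mem_ball_zero_iff.1 hz))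
        rw [hasDerivAt_iff_tendsto_slope]
        have hev : ∀ᶠ w in nhdsWithin z {z}ᶜ,
            ψ (a ^ j * (Res w * (a * Res z))) = slope (H j) z w := by
          have hball : ball (0:ℂ) s ∈ nhdsWithin z {z}ᶜ :=
            nhdsWithin_le_nhds (isOpen_ball.mem_nhds hz)
          filter_upwards [hball, self_mem_nhdsWithin] with w hw hwz
          have hw' : ‖w‖ * r₀ < 1 := hgood w (le_of_lt (mem_ball_zero_iff.1 hw))
          have hwz' : (w : ℂ) - z ≠ 0 := sub_ne_zero.2 hwz
          have hdiff : H j w - H j z = (w - z) * ψ (a ^ j * (Res w * (a * Res z))) := by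
            show ψ (a ^ j * Res w) - ψ (a ^ j * Res z) = _
            rw [← map_sub, ← mul_sub, hResdiff z w hz' hw', mul_smul_comm, map_smul, smul_eq_mul]
          rw [slope_def_field, hdiff, mul_comm, mul_div_assoc, div_self hwz', mul_one]
        have hcont : ContinuousAt (fun w => ψ (a ^ j * (Res w * (a * Res z)))) z := by
          have h1 : ContinuousAt (fun w : ℂ => a ^ j * (Res w * (a * Res z))) z :=
            (continuous_const.mul (continuous_id.mul continuous_const)).continuousAt.comp
              (hRescontAt z hz')
          exact hψcont.continuousAt.comp h1
        exact Tendsto.congr' hev ((hcont.tendsto).mono_left nhdsWithin_le_nhds)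
      have hHdc : ∀ j : ℕ, DiffContOnCl ℂ (H j) (ball (0:ℂ) s) := by
        intro j
        refine ⟨fun z hz => ((hHderiv j z hz).differentiableAt).differentiableWithinAt, ?_⟩
        rw [closure_ball (0:ℂ) hs0.ne']
        exact hHcont j
      have hMV : ∀ j : ℕ, (∮ z in C(0, s), z⁻¹ * H j z)
          = (2 * (Real.pi:ℂ) * Complex.I) * ψ (a ^ j) := by
        intro j
        have h0 : (0:ℂ) ∈ ball (0:ℂ) s := mem_ball_self hs0
        have hInt := (hHdc j).circleIntegral_sub_inv_smul h0
        simp only [sub_zero, smul_eq_mul] at hInt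
        rw [hInt]
        show _ * ψ (a ^ j * Res 0) = _
        rw [hRes0, mul_one]
      have hsphne : ∀ z : ℂ, z ∈ sphere (0:ℂ) s → z ≠ 0 := by
        intro z hz h0
        rw [h0, mem_sphere_zero_iff_norm, norm_zero] at hz
        exact hs0.ne hz
      have hHint : ∀ (k : ℤ) (j : ℕ), CircleIntegrable (fun z => (z:ℂ) ^ k * H j z) 0 s := by
        intro k j
        apply ContinuousOn.circleIntegrable hs0.le
        refine ContinuousOn.mul ?_ ((hHcont j).mono sphere_subset_closedBall)
        intro z hz
        exact (continuousAt_zpow₀ _ _ (Or.inl (hsphne z hz))).continuousWithinAt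
      have hCint : ∀ (k : ℤ) (c : ℂ), CircleIntegrable (fun z => c * (z:ℂ) ^ k) 0 s := by
        intro k c
        apply ContinuousOn.circleIntegrable hs0.le
        refine continuousOn_const.mul ?_
        intro z hz
        exact (continuousAt_zpow₀ _ _ (Or.inl (hsphne z hz))).continuousWithinAt
      have hzpow0 : ∀ k : ℤ, k ≠ -1 → (∮ z in C(0, s), (z:ℂ) ^ k) = 0 := by
        intro k hk
        have h1 := circleIntegral.integral_sub_zpow_of_ne hk 0 0 s
        have h2 : EqOn (fun z : ℂ => z ^ k) (fun z : ℂ => (z - 0) ^ k) (sphere (0:ℂ) s) := by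
          intro z _; simp
        rw [circleIntegral.integral_congr hs0.le h2, h1]
      have hkey : ∀ (m j : ℕ), (∮ z in C(0, s), (z:ℂ) ^ (-(m:ℤ) - 1) * H j z)
          = (2 * (Real.pi:ℂ) * Complex.I) * ψ (a ^ (m + j)) := by
        intro m
        induction m with
        | zero =>
          intro j
          rw [show (-((0:ℕ):ℤ) - 1) = (-1 : ℤ) by norm_num]
          have h2 : EqOn (fun z : ℂ => z ^ (-1 : ℤ) * H j z)
              (fun z : ℂ => z⁻¹ * H j z) (sphere (0:ℂ) s) := by
            intro z _
            simp [zpow_neg_one]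
          rw [circleIntegral.integral_congr hs0.le h2, hMV j, Nat.zero_add]
        | succ m ih =>
          intro j
          have heq : EqOn (fun z : ℂ => z ^ (-(((m+1):ℕ):ℤ) - 1) * H j z)
              (fun z : ℂ => ψ (a ^ j) * z ^ (-(m:ℤ) - 2) + z ^ (-(m:ℤ) - 1) * H (j+1) z)
              (sphere (0:ℂ) s) := by
            intro z hz
            have hz0 : z ≠ 0 := hsphne z hz
            have hzr : ‖z‖ * r₀ < 1 := hgood z (le_of_eq (mem_sphere_zero_iff_norm.1 hz))
            show z ^ (-(((m+1):ℕ):ℤ) - 1) * H j z = _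
            rw [hHrec j z hzr]
            have e1 : (-(((m+1):ℕ):ℤ) - 1) = (-(m:ℤ) - 2) := by push_cast; ring
            have e2 : (z:ℂ) ^ (-(m:ℤ) - 2) * z = z ^ (-(m:ℤ) - 1) := by
              rw [← zpow_add_one₀ hz0]
              congr 1
              ring
            rw [e1, mul_add, mul_comm (z ^ (-(m:ℤ) - 2)) (ψ (a ^ j)), ← mul_assoc, e2]
          rw [circleIntegral.integral_congr hs0.le heq,
            circleIntegral_add' (hCint _ _) (hHint _ _)]
          have hz0int : (∮ z in C(0, s), ψ (a ^ j) * (z:ℂ) ^ (-(m:ℤ) - 2)) = 0 := by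
            have hsmul : (∮ z in C(0, s), ψ (a ^ j) * (z:ℂ) ^ (-(m:ℤ) - 2))
                = ψ (a ^ j) * ∮ z in C(0, s), (z:ℂ) ^ (-(m:ℤ) - 2) := by
              have := circleIntegral.integral_smul (𝕜 := ℂ) (ψ (a ^ j))
                (fun z => (z:ℂ) ^ (-(m:ℤ) - 2)) 0 s
              simp only [smul_eq_mul] at this
              exact this
            rw [hsmul, hzpow0 _ (by omega), mul_zero]
          rw [hz0int, zero_add, ih (j+1)]
          have hjm : m + (j + 1) = m + 1 + j := by omega
          rw [hjm]
      -- the Cauchy estimate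
      have hnormint : ‖∮ z in C(0, s), (z:ℂ) ^ (-(n:ℤ) - 1) * H 0 z‖
          ≤ 2 * Real.pi * s * (s ^ (-(n:ℤ) - 1) * M) := by
        apply circleIntegral.norm_integral_le_of_norm_le_const hs0.le
        intro z hz
        have hzs : ‖z‖ = s := mem_sphere_zero_iff_norm.1 hz
        rw [norm_mul, norm_zpow, hzs]
        refine mul_le_mul_of_nonneg_left ?_ (zpow_nonneg hs0.le _)
        have hH0 : ‖H 0 z‖ ≤ p (Res z) := by
          show ‖ψ (a ^ 0 * Res z)‖ ≤ _
          rw [pow_zero, one_mul]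
          exact hψabs _
        exact hH0.trans (hmax z hz)
      have hψn : ‖ψ (a ^ n)‖ ≤ M * s⁻¹ ^ n := by
        have h1 := hkey n 0
        rw [Nat.add_zero] at h1
        have h2 : ‖(2 * (Real.pi:ℂ) * Complex.I) * ψ (a ^ n)‖
            = 2 * Real.pi * ‖ψ (a ^ n)‖ := by
          rw [norm_mul, norm_mul, norm_mul, Complex.norm_I, mul_one, Complex.norm_real,
            Real.norm_eq_abs, abs_of_pos Real.pi_pos]
          norm_num
        have h3 : 2 * Real.pi * ‖ψ (a ^ n)‖ ≤ 2 * Real.pi * s * (s ^ (-(n:ℤ) - 1) * M) := by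
          rw [← h2, ← h1]
          exact hnormint
        have h4 : s * (s ^ (-(n:ℤ) - 1) * M) = M * s⁻¹ ^ n := by
          rw [← mul_assoc, mul_comm s (s ^ (-(n:ℤ) - 1)), ← zpow_add_one₀ hs0.ne']
          have he : (-(n:ℤ) - 1 + 1) = -(n:ℤ) := by ring
          rw [he, zpow_neg, zpow_natCast, ← inv_pow, mul_comm]
        have h5 : 2 * Real.pi * ‖ψ (a ^ n)‖ ≤ 2 * Real.pi * (M * s⁻¹ ^ n) := by
          calc 2 * Real.pi * ‖ψ (a ^ n)‖ ≤ 2 * Real.pi * s * (s ^ (-(n:ℤ) - 1) * M) := h3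
            _ = 2 * Real.pi * (M * s⁻¹ ^ n) := by rw [mul_assoc, h4]
        exact le_of_mul_le_mul_left h5 Real.two_pi_pos
      calc p (a ^ n) = (ψ (a ^ n)).re := hψre.symm
        _ ≤ ‖ψ (a ^ n)‖ := by exact Complex.re_le_norm _
        _ ≤ M * s⁻¹ ^ n := hψn
    -- conclude membership
    have hinv1 : s⁻¹ < 1 := by
      rw [inv_lt_one_iff₀]
      right; exact hs1
    have hlim : Tendsto (fun n : ℕ => M * s⁻¹ ^ n) atTop (nhds 0) := by
      have h1 : Tendsto (fun n : ℕ => s⁻¹ ^ n) atTop (nhds 0) :=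
        tendsto_pow_atTop_nhds_zero_of_lt_one (by positivity) hinv1
      simpa using h1.const_mul M
    have hev : ∀ᶠ n in atTop, M * s⁻¹ ^ n < 1 := hlim.eventually (gt_mem_nhds one_pos)
    filter_upwards [hev] with n hn
    have hp1 : p (a ^ n) < 1 := lt_of_le_of_lt (hbound n) hn
    have hmem : a ^ n ∈ W :=
      gauge_lt_one_subset_self hWconv (mem_of_mem_nhds hWnhds) habs hp1
    exact hWU hmem
  -- wrap up
  have hunit1 : IsUnit (1 - a) := by
    have := hunit 1 (by simpa using hr₀lt)
    rwa [one_smul] at this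
  set b : A := Ring.inverse (1 - a) with hbdef
  have hb1 : (1 - a) * b = 1 := Ring.mul_inverse_cancel _ hunit1
  have hb2 : b * (1 - a) = 1 := Ring.inverse_mul_cancel _ hunit1
  have hgeo : ∀ N : ℕ, (1 - a) * (∑ n ∈ Finset.range N, a ^ n) = 1 - a ^ N := by
    intro N
    have h := mul_geom_sum a N
    calc (1 - a) * (∑ n ∈ Finset.range N, a ^ n)
        = -((a - 1) * ∑ n ∈ Finset.range N, a ^ n) := by rw [← neg_mul, neg_sub]
      _ = 1 - a ^ N := by rw [h, neg_sub]
  refine ⟨b, ?_, hb1, hb2, hunit1⟩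
  have hSN : ∀ N : ℕ, (∑ n ∈ Finset.range N, a ^ n) = b - b * a ^ N := by
    intro N
    have h1 : b * ((1 - a) * (∑ n ∈ Finset.range N, a ^ n)) = ∑ n ∈ Finset.range N, a ^ n := by
      rw [← mul_assoc, hb2, one_mul]
    rw [hgeo N] at h1
    rw [← h1, mul_sub, mul_one]
  have hl1 : Tendsto (fun N : ℕ => b * a ^ N) atTop (nhds 0) := by
    simpa using hpow.const_mul b
  have hl2 : Tendsto (fun N : ℕ => b - b * a ^ N) atTop (nhds b) := by
    simpa using tendsto_const_nhds.sub hl1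
  exact hl2.congr (fun N => (hSN N).symm)
end
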